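/- Fix n ≥ 1, κ ≥ 1, and let θ ∈ Equiv.Perm (Fin n × Fin κ) be a block permutation with θ (i,a) = (π i, d (π i) a) for π ∈ Equiv.Perm (Fin n) and d : Fin n → Equiv.Perm (Fin κ). Let T^θ be the real permutation matrix, with rows and columns indexed by strategy profiles Fin n → Fin κ, whose (y,x) entry is 1 if y = (fun j => d j (x (π⁻¹ j))) and 0 otherwise (equivalently T^θ = (D_1 ⊗ ⋯ ⊗ D_n) · T_π, where D_j is the κ×κ permutation matrix of d j and T_π is the profile permutation matrix of π). Then: (1) the map φⁿ(θ) := P_π ⊗ T^θ is a linear representation of the group of block permutations, i.e. φⁿ(θ ∘ θ') = φⁿ(θ) · φⁿ(θ') and each φⁿ(θ) is invertible; (2) for a finite game c : Fin n → ((Fin n → Fin κ) → ℝ), θ is a strategy symmetry of c if and only if V_G · (P_π ⊗ T^θ) = V_G. -/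

import Mathlib

open Matrix Kronecker

/-- The `n×n` permutation matrix of `π`: `(i,j)` entry is `1` if `i = π j`. -/
def permMat (n : ℕ) (π : Equiv.Perm (Fin n)) : Matrix (Fin n) (Fin n) ℝ :=
  Matrix.of fun i j => if i = π j then 1 else 0

/-- The matrix `T^θ` of a block permutation with data `(π, d)`: the `(y,x)`
entry is `1` if `y = (fun j => d j (x (π⁻¹ j)))` and `0` otherwise. -/
def blockProfMat (n κ : ℕ) (π : Equiv.Perm (Fin n))
    (d : Fin n → Equiv.Perm (Fin κ)) :
    Matrix (Fin n → Fin κ) (Fin n → Fin κ) ℝ :=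
  Matrix.of fun y x => if y = fun j => d j (x (π⁻¹ j)) then 1 else 0

/-- `φⁿ(θ) := P_π ⊗ T^θ` for a block permutation `θ` with data `(π, d)`. -/
def phiN (n κ : ℕ) (π : Equiv.Perm (Fin n)) (d : Fin n → Equiv.Perm (Fin κ)) :
    Matrix (Fin n × (Fin n → Fin κ)) (Fin n × (Fin n → Fin κ)) ℝ :=
  permMat n π ⊗ₖ blockProfMat n κ π d

theorem permMat_mul (n : ℕ) (π π' : Equiv.Perm (Fin n)) :
    permMat n π * permMat n π' = permMat n (π * π') := by
  ext i j
  simp only [permMat, Matrix.mul_apply, Matrix.of_apply, ite_mul, one_mul, zero_mul]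
  rw [Finset.sum_eq_single (π' j)]
  · simp; rfl
  · intro k _ hk; simp [hk]
  · simp

theorem blockProfMat_mul (n κ : ℕ) (π π' : Equiv.Perm (Fin n))
    (d d' : Fin n → Equiv.Perm (Fin κ)) :
    blockProfMat n κ π d * blockProfMat n κ π' d'
      = blockProfMat n κ (π * π') (fun j => d j * d' (π⁻¹ j)) := by
  ext y x
  simp only [blockProfMat, Matrix.mul_apply, Matrix.of_apply, mul_ite, mul_one, mul_zero,
    ite_mul, one_mul, zero_mul]
  rw [Finset.sum_eq_single (fun j => d' j (x (π'⁻¹ j)))]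
  · simp [Equiv.Perm.mul_apply]
  · intro z _ hz
    rw [if_neg hz]
  · simp

theorem phiN_mul (n κ : ℕ) (π π' : Equiv.Perm (Fin n))
    (d d' : Fin n → Equiv.Perm (Fin κ)) :
    phiN n κ π d * phiN n κ π' d'
      = phiN n κ (π * π') (fun j => d j * d' (π⁻¹ j)) := by
  unfold phiN
  rw [← Matrix.mul_kronecker_mul, permMat_mul, blockProfMat_mul]

theorem phiN_one (n κ : ℕ) : phiN n κ 1 (fun _ => 1) = 1 := by
  have h1 : permMat n 1 = 1 := by
    ext i j; simp [permMat, Matrix.one_apply]; rfl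
  have h2 : blockProfMat n κ 1 (fun _ => 1) = 1 := by
    ext y x; simp [blockProfMat, Matrix.one_apply]
  unfold phiN
  rw [h1, h2, Matrix.one_kronecker_one]

/-- (1) `φⁿ` is a linear representation of the group of block
permutations: `φⁿ(θ ∘ θ') = φⁿ(θ) · φⁿ(θ')` and each `φⁿ(θ)` is invertible;
(2) a block permutation `θ` with data `(π, d)` is a strategy symmetry of a
game `c` iff `V_G · (P_π ⊗ T^θ) = V_G`. -/
theorem stmt10 (n κ : ℕ) (hn : 1 ≤ n) (hκ : 1 ≤ κ)
    (θ : Equiv.Perm (Fin n × Fin κ)) (π : Equiv.Perm (Fin n))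
    (d : Fin n → Equiv.Perm (Fin κ))
    (hθ : ∀ (i : Fin n) (a : Fin κ), θ (i, a) = (π i, d (π i) a)) :
    ((∀ (θ' : Equiv.Perm (Fin n × Fin κ)) (π' π'' : Equiv.Perm (Fin n))
        (d' d'' : Fin n → Equiv.Perm (Fin κ)),
        (∀ (i : Fin n) (a : Fin κ), θ' (i, a) = (π' i, d' (π' i) a)) →
        (∀ (i : Fin n) (a : Fin κ), (θ * θ') (i, a) = (π'' i, d'' (π'' i) a)) →
        phiN n κ π'' d'' = phiN n κ π d * phiN n κ π' d') ∧
      IsUnit (phiN n κ π d)) ∧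
    (∀ c : Fin n → (Fin n → Fin κ) → ℝ,
      (∀ (i : Fin n) (x : Fin n → Fin κ),
          c i x = c (π i) fun j => d j (x (π⁻¹ j))) ↔
      Matrix.vecMul (fun p : Fin n × (Fin n → Fin κ) => c p.1 p.2) (phiN n κ π d)
        = fun p : Fin n × (Fin n → Fin κ) => c p.1 p.2) := by
  constructor
  · constructor
    · intro θ' π' π'' d' d'' h' h''
      have key : ∀ (i : Fin n) (a : Fin κ),
          (π'' i, d'' (π'' i) a) = (π (π' i), d (π (π' i)) (d' (π' i) a)) := by
        intro i a
        rw [← h'' i a]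
        show θ (θ' (i, a)) = _
        rw [h' i a, hθ (π' i) (d' (π' i) a)]
      have a0 : Fin κ := ⟨0, hκ⟩
      have hπ : π'' = π * π' := by
        ext i
        exact congrArg Fin.val (congrArg Prod.fst (key i a0))
      have hd : d'' = fun j => d j * d' (π⁻¹ j) := by
        funext j
        ext a
        have h1 := key (π'⁻¹ (π⁻¹ j)) a
        have h2 : π'' (π'⁻¹ (π⁻¹ j)) = j := by
          rw [hπ]; simp
        have h3 : π (π' (π'⁻¹ (π⁻¹ j))) = j := by simp
        rw [h2, h3] at h1
        have h4 := congrArg Prod.snd h1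
        rw [show π' (π'⁻¹ (π⁻¹ j)) = π⁻¹ j from π'.apply_symm_apply _] at h4
        exact congrArg Fin.val h4
      rw [hπ, hd, phiN_mul]
    · refine ⟨⟨phiN n κ π d, phiN n κ π⁻¹ (fun j => (d (π j))⁻¹), ?_, ?_⟩, rfl⟩
      · rw [phiN_mul]
        have h1 : π * π⁻¹ = 1 := mul_inv_cancel π
        have h2 : (fun j => d j * (fun j => (d (π j))⁻¹) (π⁻¹ j))
            = fun _ : Fin n => (1 : Equiv.Perm (Fin κ)) := by
          funext j; simp
        rw [h1, h2, phiN_one]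
      · rw [phiN_mul]
        have h1 : π⁻¹ * π = 1 := inv_mul_cancel π
        have h2 : (fun j => (fun j => (d (π j))⁻¹) j * d (π⁻¹⁻¹ j))
            = fun _ : Fin n => (1 : Equiv.Perm (Fin κ)) := by
          funext j; simp
        rw [h1, h2, phiN_one]
  · intro c
    have hmul : ∀ (j : Fin n) (x : Fin n → Fin κ),
        Matrix.vecMul (fun p : Fin n × (Fin n → Fin κ) => c p.1 p.2) (phiN n κ π d) (j, x)
          = c (π j) (fun k => d k (x (π⁻¹ k))) := by
      intro j x
      simp only [Matrix.vecMul, dotProduct, phiN, Matrix.kroneckerMap_apply,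
        permMat, blockProfMat, Matrix.of_apply, Fintype.sum_prod_type]
      rw [Finset.sum_eq_single (π j)]
      · rw [Finset.sum_eq_single (fun k => d k (x (π⁻¹ k)))]
        · simp
        · intro y _ hy; simp [hy]; intro h; exact absurd h hy
        · simp
      · intro i _ hi
        simp [hi]
      · simp
    constructor
    · intro h
      funext p
      obtain ⟨j, x⟩ := p
      rw [hmul j x]
      exact (h j x).symm
    · intro h i x
      have := congrFun h (i, x)
      rw [hmul i x] at this
      exact this.symm
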